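/- Let 𝒜 be a pre-2-filtered 2-category and F a pseudofunctor from 𝒜 to Cat. Let (u, ξ, v) : (A, x) → (B, y) be a premorphism with codomain C, and let w : C ⟶ D, s : A ⟶ D, t : B ⟶ D be 1-cells with invertible 2-cells α : s ⟹ u ≫ w and β : v ≫ w ⟹ t. Then (u, ξ, v) is equivalent to the premorphism (s, F(α)ₓ ≫ F(w)(ξ) ≫ F(β)_y, t) : (A, x) → (B, y). -/

import Mathlib

open CategoryTheory Bicategory CategoryTheory.Limits

universe w₂ v₂ u₂ w v u p p' t s t' s' t₁ s₁ t₂ s₂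

namespace DubucStreet

variable {𝒜 : Type u} [Bicategory.{w, v} 𝒜]

/-- The LL equation for a pair of 2-cells `(α, β)` relative to `(γ₁, γ₂)`. -/
def LLeq {E A B C₁ C₂ C : 𝒜} (f : E ⟶ A) (g : E ⟶ B)
    {u₁ : A ⟶ C₁} {v₁ : B ⟶ C₁} {u₂ : A ⟶ C₂} {v₂ : B ⟶ C₂}
    (γ₁ : f ≫ u₁ ⟶ g ≫ v₁) (γ₂ : f ≫ u₂ ⟶ g ≫ v₂)
    (w₁ : C₁ ⟶ C) (w₂ : C₂ ⟶ C)
    (α : v₁ ≫ w₁ ⟶ v₂ ≫ w₂) (β : u₁ ≫ w₁ ⟶ u₂ ≫ w₂) : Prop :=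
  (α_ f u₁ w₁).inv ≫ (γ₁ ▷ w₁) ≫ (α_ g v₁ w₁).hom ≫ (g ◁ α) =
    (f ◁ β) ≫ (α_ f u₂ w₂).inv ≫ (γ₂ ▷ w₂) ≫ (α_ g v₂ w₂).hom

/-- Axiom F1 : every cospan of 1-cells can be completed to a square with an
invertible 2-cell. -/
def AxiomF1 (𝒜 : Type u) [Bicategory.{w, v} 𝒜] : Prop :=
  ∀ {E A B : 𝒜} (f : E ⟶ A) (g : E ⟶ B),
    ∃ (C : 𝒜) (u : A ⟶ C) (v : B ⟶ C), Nonempty (f ≫ u ≅ g ≫ v)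

/-- Axiom F2 : any two 2-cells as below can be equalized by a pair of invertible
2-cells satisfying the LL equation. -/
def AxiomF2 (𝒜 : Type u) [Bicategory.{w, v} 𝒜] : Prop :=
  ∀ {E A B C₁ C₂ : 𝒜} {f : E ⟶ A} {g : E ⟶ B}
    {u₁ : A ⟶ C₁} {v₁ : B ⟶ C₁} {u₂ : A ⟶ C₂} {v₂ : B ⟶ C₂}
    (γ₁ : f ≫ u₁ ⟶ g ≫ v₁) (γ₂ : f ≫ u₂ ⟶ g ≫ v₂),
    ∃ (C : 𝒜) (w₁ : C₁ ⟶ C) (w₂ : C₂ ⟶ C)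
      (α : v₁ ≫ w₁ ≅ v₂ ≫ w₂) (β : u₁ ≫ w₁ ≅ u₂ ≫ w₂),
      LLeq f g γ₁ γ₂ w₁ w₂ α.hom β.hom

/-- A premorphism `(A, x) → (B, y)` : a cospan `u : A ⟶ C`, `v : B ⟶ C` together with a
morphism `ξ : F(u)(x) ⟶ F(v)(y)` in `F(C)`. -/
structure Premor (F : Pseudofunctor 𝒜 Cat.{v₂, u₂}) (A B : 𝒜) (x : F.obj A) (y : F.obj B) where
  cod : 𝒜
  u : A ⟶ cod
  v : B ⟶ cod
  ξ : (F.map u).toFunctor.obj x ⟶ (F.map v).toFunctor.obj y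

/-- The LL equation for homotopy data `(w₁, w₂, α, β)` between two premorphisms :
`F(w₁)(ξ₁) ≫ F(α)_y = F(β)_x ≫ F(w₂)(ξ₂)`, all identifications being made via the
compositor isomorphisms of `F`. -/
def HomotopyLL (F : Pseudofunctor 𝒜 Cat.{v₂, u₂}) {A B : 𝒜} {x : F.obj A} {y : F.obj B}
    (p q : Premor F A B x y) {V : 𝒜} (w₁ : p.cod ⟶ V) (w₂ : q.cod ⟶ V)
    (α : p.v ≫ w₁ ⟶ q.v ≫ w₂) (β : p.u ≫ w₁ ⟶ q.u ≫ w₂) : Prop :=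
  (F.map w₁).toFunctor.map p.ξ ≫ (F.mapComp p.v w₁).inv.toNatTrans.app y ≫ (F.map₂ α).toNatTrans.app y ≫
      (F.mapComp q.v w₂).hom.toNatTrans.app y =
    (F.mapComp p.u w₁).inv.toNatTrans.app x ≫ (F.map₂ β).toNatTrans.app x ≫ (F.mapComp q.u w₂).hom.toNatTrans.app x ≫
      (F.map w₂).toFunctor.map q.ξ

/-- A homotopy `(w₁, w₂, α, β)` between two premorphisms. -/
structure Homotopy (F : Pseudofunctor 𝒜 Cat.{v₂, u₂}) {A B : 𝒜} {x : F.obj A} {y : F.obj B}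
    (p q : Premor F A B x y) where
  vertex : 𝒜
  w₁ : p.cod ⟶ vertex
  w₂ : q.cod ⟶ vertex
  α : p.v ≫ w₁ ≅ q.v ≫ w₂
  β : p.u ≫ w₁ ≅ q.u ≫ w₂
  ll : HomotopyLL F p q w₁ w₂ α.hom β.hom

/-- Two premorphisms are equivalent when there is a homotopy from one to the other. -/
def PreEquiv (F : Pseudofunctor 𝒜 Cat.{v₂, u₂}) {A B : 𝒜} {x : F.obj A} {y : F.obj B}
    (p q : Premor F A B x y) : Prop :=
  Nonempty (Homotopy F p q)

lemma map₂_inv_hom_app_assoc (F : Pseudofunctor 𝒜 Cat.{v₂, u₂}) {a b : 𝒜} {f g : a ⟶ b}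
    (i : f ≅ g) (Z : F.obj a) {W : F.obj b} (h : (F.map g).toFunctor.obj Z ⟶ W) :
    (F.map₂ i.inv).toNatTrans.app Z ≫ (F.map₂ i.hom).toNatTrans.app Z ≫ h = h := by
  rw [← Category.assoc, ← Cat.Hom₂.comp_app, ← PrelaxFunctor.map₂_comp, Iso.inv_hom_id,
    PrelaxFunctor.map₂_id, Cat.Hom₂.id_app, Category.id_comp]

/-- A premorphism `(u, ξ, v)` is equivalent to the premorphism
`(s, F(α)ₓ ≫ F(w)(ξ) ≫ F(β)_y, t)` obtained by pushing it further along `w` via the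
invertible 2-cells `α : s ⟹ u ≫ w` and `β : v ≫ w ⟹ t`. -/
theorem premorphism_pushed_further [Bicategory.Strict 𝒜]
    (h1 : AxiomF1 𝒜) (h2 : AxiomF2 𝒜)
    (F : Pseudofunctor 𝒜 Cat.{v₂, u₂}) {A B : 𝒜} {x : F.obj A} {y : F.obj B}
    (p : Premor F A B x y) {D : 𝒜} (w : p.cod ⟶ D) (s : A ⟶ D) (t : B ⟶ D)
    (α : s ≅ p.u ≫ w) (β : p.v ≫ w ≅ t) :
    PreEquiv F p
      (⟨D, s, t,
        (F.map₂ α.hom).toNatTrans.app x ≫ (F.mapComp p.u w).hom.toNatTrans.app x ≫ (F.map w).toFunctor.map p.ξ ≫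
          (F.mapComp p.v w).inv.toNatTrans.app y ≫ (F.map₂ β.hom).toNatTrans.app y⟩ : Premor F A B x y) := by
  refine ⟨⟨D, w, 𝟙 D, β ≪≫ (ρ_ t).symm, α.symm ≪≫ (ρ_ s).symm, ?_⟩⟩
  simp only [HomotopyLL, Iso.trans_hom, Iso.symm_hom]
  simp only [PrelaxFunctor.map₂_comp, Pseudofunctor.mapComp_id_right_hom,
    NatTrans.comp_app, Cat.Hom₂.comp_app, Cat.whiskerLeft_app, Functor.map_comp,
    ← PrelaxFunctor.map₂_comp, Iso.inv_hom_id, Iso.hom_inv_id]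
  simp only [PrelaxFunctor.map₂_comp, NatTrans.comp_app, Category.assoc]
  simp only [Cat.rightUnitor_inv_app, Category.id_comp, Category.comp_id, eqToHom_refl]
  simp only [PrelaxFunctor.map₂_comp, NatTrans.comp_app, Category.assoc,
    ← (F.mapId D).inv.toNatTrans.naturality_assoc, ← (F.mapId D).inv.toNatTrans.naturality]
  simp only [Pseudofunctor.mapComp_id_right_hom, NatTrans.comp_app, Cat.Hom₂.comp_app,
    Cat.whiskerLeft_app, Category.assoc, Cat.rightUnitor_hom_app, Cat.rightUnitor_inv_app,
    Category.id_comp, Category.comp_id, eqToHom_refl,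
    Iso.hom_inv_id_app, Iso.hom_inv_id_app_assoc, Iso.inv_hom_id_app, Iso.inv_hom_id_app_assoc,
    ← PrelaxFunctor.map₂_comp_assoc, ← PrelaxFunctor.map₂_comp, Iso.inv_hom_id, Iso.hom_inv_id,
    PrelaxFunctor.map₂_id, NatTrans.id_app]
  simp only [Cat.Hom.id_map, PrelaxFunctor.map₂_comp, NatTrans.comp_app, Cat.Hom₂.comp_app,
    Category.assoc, map₂_inv_hom_app_assoc, Cat.Hom.inv_hom_id_toNatTrans_app_assoc]

end DubucStreet
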